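/- Let a,b,c,d,e,f,p,q,r be complex numbers with ac+bd = -1, ae+bf = -1, ce+df = -1. Define g_{i,j,k} = p a^j b^k + q c^j d^k + r e^j f^k for nonnegative integers i,j,k (so g depends only on j,k here), and define x = -bdf, y = -ace, s = ace+a+c+e, t = bdf+b+d+f. Then for all nonnegative integers j,k: (1) p a^{j+2} b^k + q c^{j+2} d^k + r e^{j+2} f^k = (p a^j b^k + q c^j d^k + r e^j f^k) + s(p a^{j+1} b^k + q c^{j+1} d^k + r e^{j+1} f^k) + x(p a^j b^{k+1} + q c^j d^{k+1} + r e^j f^{k+1}); (2) p a^{j+1} b^{k+1} + q c^{j+1} d^{k+1} + r e^{j+1} f^{k+1} = x(p a^{j+1} b^k + q c^{j+1} d^k + r e^{j+1} f^k) + y(p a^j b^{k+1} + q c^j d^{k+1} + r e^j f^{k+1}); (3) p a^j b^{k+2} + q c^j d^{k+2} + r e^j f^{k+2} = (p a^j b^k + q c^j d^k + r e^j f^k) + y(p a^{j+1} b^k + q c^{j+1} d^k + r e^{j+1} f^k) + t(p a^j b^{k+1} + q c^j d^{k+1} + r e^j f^{k+1}). -/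
import Mathlib


theorem stmt_1 (a b c d e f p q r : ℂ)
    (h1 : a*c + b*d = -1) (h2 : a*e + b*f = -1) (h3 : c*e + d*f = -1)
    (x y s t : ℂ)
    (hx : x = -(b*d*f)) (hy : y = -(a*c*e))
    (hs : s = a*c*e + a + c + e) (ht : t = b*d*f + b + d + f) :
    ∀ j k : ℕ,
      (p * a^(j+2) * b^k + q * c^(j+2) * d^k + r * e^(j+2) * f^k =
        (p * a^j * b^k + q * c^j * d^k + r * e^j * f^k)
        + s * (p * a^(j+1) * b^k + q * c^(j+1) * d^k + r * e^(j+1) * f^k)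
        + x * (p * a^j * b^(k+1) + q * c^j * d^(k+1) + r * e^j * f^(k+1))) ∧
      (p * a^(j+1) * b^(k+1) + q * c^(j+1) * d^(k+1) + r * e^(j+1) * f^(k+1) =
        x * (p * a^(j+1) * b^k + q * c^(j+1) * d^k + r * e^(j+1) * f^k)
        + y * (p * a^j * b^(k+1) + q * c^j * d^(k+1) + r * e^j * f^(k+1))) ∧
      (p * a^j * b^(k+2) + q * c^j * d^(k+2) + r * e^j * f^(k+2) =
        (p * a^j * b^k + q * c^j * d^k + r * e^j * f^k)
        + y * (p * a^(j+1) * b^k + q * c^(j+1) * d^k + r * e^(j+1) * f^k)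
        + t * (p * a^j * b^(k+1) + q * c^j * d^(k+1) + r * e^j * f^(k+1))) := by
  subst hx hy hs ht
  have L1a : a^2 = 1 + (a*c*e + a + c + e) * a + (-(b*d*f)) * b := by
    linear_combination -(a*e + 1) * h1 + (b*d) * h2
  have L1c : c^2 = 1 + (a*c*e + a + c + e) * c + (-(b*d*f)) * d := by
    linear_combination -(c*e + 1) * h1 + (b*d) * h3
  have L1e : e^2 = 1 + (a*c*e + a + c + e) * e + (-(b*d*f)) * f := by
    linear_combination (d*f) * h2 - (a*e + 1) * h3
  have L2a : a*b = (-(b*d*f)) * a + (-(a*c*e)) * b := by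
    linear_combination (a*b) * h3
  have L2c : c*d = (-(b*d*f)) * c + (-(a*c*e)) * d := by
    linear_combination (c*d) * h2
  have L2e : e*f = (-(b*d*f)) * e + (-(a*c*e)) * f := by
    linear_combination (e*f) * h1
  have L3a : b^2 = 1 + (-(a*c*e)) * a + (b*d*f + b + d + f) * b := by
    linear_combination (a*e) * h1 - (b*d + 1) * h2
  have L3c : d^2 = 1 + (-(a*c*e)) * c + (b*d*f + b + d + f) * d := by
    linear_combination (c*e) * h1 - (b*d + 1) * h3
  have L3e : f^2 = 1 + (-(a*c*e)) * e + (b*d*f + b + d + f) * f := by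
    linear_combination -(d*f + 1) * h2 + (a*e) * h3
  intro j k
  refine ⟨?_, ?_, ?_⟩
  · linear_combination (p * a^j * b^k) * L1a + (q * c^j * d^k) * L1c
      + (r * e^j * f^k) * L1e
  · linear_combination (p * a^j * b^k) * L2a + (q * c^j * d^k) * L2c
      + (r * e^j * f^k) * L2e
  · linear_combination (p * a^j * b^k) * L3a + (q * c^j * d^k) * L3c
      + (r * e^j * f^k) * L3e
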